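/- Let G be a group, n ≥ 3, and let e, f, g, h ∈ End F_n(G) be rank-1 idempotents with e R f, f L g, g R h, h L e. Then the square (e, f, g, h) is singular if and only if it is up-down singular, i.e., if there exists an idempotent k ∈ End F_n(G) with either (ek = e, fk = f, ke = h, kf = g) or (ke = e, kh = h, ek = f, hk = g), then there exists an idempotent k' with ek' = e, fk' = f, k'e = h, k'f = g. -/

import Mathlib

/-- An endomorphism of the rank-`n` free left `G`-act `F_n(G) = G × Fin n`
(the formal symbols `g x_i` are the pairs `(g, i)`), where the action is
`h • (g, i) = (h * g, i)` and equivariance says `(h • x) a = h • (x a)`. -/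
structure ActEnd (G : Type*) [Group G] (n : ℕ) : Type _ where
  toFun : G × Fin n → G × Fin n
  equivariant : ∀ (h : G) (x : G × Fin n),
    toFun (h * x.1, x.2) = (h * (toFun x).1, (toFun x).2)

namespace ActEnd

variable {G : Type*} [Group G] {n : ℕ}

/-- Composition is written left-to-right: `x (a * b) = (x a) b`. -/
instance : Monoid (ActEnd G n) where
  mul a b := ⟨fun x => b.toFun (a.toFun x), by
    intro h x
    try dsimp only
    rw [a.equivariant h x, b.equivariant]⟩
  one := ⟨id, fun _ _ => rfl⟩
  mul_assoc _ _ _ := rfl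
  one_mul _ := rfl
  mul_one _ := rfl

@[simp] theorem mul_toFun (a b : ActEnd G n) (x : G × Fin n) :
    (a * b).toFun x = b.toFun (a.toFun x) := rfl

theorem ext' {a b : ActEnd G n} (h : a.toFun = b.toFun) : a = b := by
  cases a; cases b; cases h; rfl

/-- The rank of an endomorphism of `F_n(G)`: the number of indices `j` such
that `G x_j` meets the image. -/
noncomputable def rank (a : ActEnd G n) : ℕ :=
  Nat.card {j : Fin n // ∃ x, (a.toFun x).2 = j}

end ActEnd

/-- The principal left ideal `M a` of `a`. -/
def lIdeal {M : Type*} [Monoid M] (a : M) : Set M := Set.range fun m => m * a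

/-- The principal right ideal `a M` of `a`. -/
def rIdeal {M : Type*} [Monoid M] (a : M) : Set M := Set.range fun m => a * m

/-- The `H`-class of `e`: all elements that are both `L`- and `R`-related to `e`. -/
def hClass {M : Type*} [Monoid M] (e : M) : Set M :=
  {a | lIdeal a = lIdeal e ∧ rIdeal a = rIdeal e}

namespace ActEnd

variable {G : Type*} [Group G] {n : ℕ}

theorem apply_eq (a : ActEnd G n) (x : G) (i : Fin n) :
    a.toFun (x, i) = (x * (a.toFun (1, i)).1, (a.toFun (1, i)).2) := by
  simpa using a.equivariant x (1, i)

theorem col_const {a : ActEnd G n} (ha : rank a = 1) (x y : G × Fin n) :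
    (a.toFun x).2 = (a.toFun y).2 := by
  have h1 : Nat.card {j : Fin n // ∃ z, (a.toFun z).2 = j} = 1 := ha
  rw [Nat.card_eq_one_iff_unique] at h1
  have := h1.1
  have hx : (⟨(a.toFun x).2, x, rfl⟩ : {j : Fin n // ∃ z, (a.toFun z).2 = j})
      = ⟨(a.toFun y).2, y, rfl⟩ := Subsingleton.elim _ _
  exact congrArg Subtype.val hx

/-- A "diagonal" endomorphism given by a column map `τ` and multipliers `κ`. -/
def diag (τ : Fin n → Fin n) (κ : Fin n → G) : ActEnd G n :=
  ⟨fun x => (x.1 * κ x.2, τ x.2), fun h x => by dsimp only; rw [mul_assoc]⟩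

@[simp] theorem diag_toFun (τ : Fin n → Fin n) (κ : Fin n → G) (x : G × Fin n) :
    (diag τ κ).toFun x = (x.1 * κ x.2, τ x.2) := rfl

end ActEnd

/-- A singular `E`-square `(e, f, g, h)` of rank-1 idempotents of `End F_n(G)`
(`n ≥ 3`) is in fact up-down singular: if some idempotent `k` witnesses an
up-down or a left-right singularisation, then some idempotent `k'` witnesses an
up-down one. -/
theorem stmt9 {G : Type*} [Group G] {n : ℕ} (hn : 3 ≤ n) (e f g h : ActEnd G n)
    (he : e * e = e) (hf : f * f = f) (hg : g * g = g) (hh : h * h = h)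
    (hre : ActEnd.rank e = 1) (hrf : ActEnd.rank f = 1)
    (hrg : ActEnd.rank g = 1) (hrh : ActEnd.rank h = 1)
    (hef : rIdeal e = rIdeal f) (hfg : lIdeal f = lIdeal g)
    (hgh : rIdeal g = rIdeal h) (hhe : lIdeal h = lIdeal e) :
    (∃ k : ActEnd G n, k * k = k ∧
        ((e * k = e ∧ f * k = f ∧ k * e = h ∧ k * f = g) ∨
         (k * e = e ∧ k * h = h ∧ e * k = f ∧ h * k = g))) →
      ∃ k' : ActEnd G n, k' * k' = k' ∧
        (e * k' = e ∧ f * k' = f ∧ k' * e = h ∧ k' * f = g) := by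
  rintro ⟨k, hkk, hud | hlr⟩
  · exact ⟨k, hkk, hud⟩
  obtain ⟨hke, hkh, hek, hhk⟩ := hlr
  have i0 : Fin n := ⟨0, by omega⟩
  obtain ⟨p, hpe⟩ : ∃ p, ∀ x, (e.toFun x).2 = p :=
    ⟨(e.toFun (1, i0)).2, fun x => ActEnd.col_const hre x (1, i0)⟩
  obtain ⟨q, hqg⟩ : ∃ q, ∀ x, (g.toFun x).2 = q :=
    ⟨(g.toFun (1, i0)).2, fun x => ActEnd.col_const hrg x (1, i0)⟩
  obtain ⟨u, hu⟩ : ∃ u, u * e = h := by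
    have : h ∈ lIdeal e := by rw [← hhe]; exact ⟨1, one_mul h⟩
    exact this
  have hph : ∀ x, (h.toFun x).2 = p := by
    intro x
    rw [← hu, ActEnd.mul_toFun]
    exact hpe _
  obtain ⟨w, hw⟩ : ∃ w, w * g = f := by
    have : f ∈ lIdeal g := by rw [← hfg]; exact ⟨1, one_mul f⟩
    exact this
  have hqf : ∀ x, (f.toFun x).2 = q := by
    intro x
    rw [← hw, ActEnd.mul_toFun]
    exact hqg _
  obtain ⟨E, hE⟩ : ∃ E : Fin n → G, ∀ x i, e.toFun (x, i) = (x * E i, p) :=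
    ⟨fun i => (e.toFun (1, i)).1, fun x i => by rw [ActEnd.apply_eq, hpe]⟩
  obtain ⟨F, hF⟩ : ∃ F : Fin n → G, ∀ x i, f.toFun (x, i) = (x * F i, q) :=
    ⟨fun i => (f.toFun (1, i)).1, fun x i => by rw [ActEnd.apply_eq, hqf]⟩
  obtain ⟨Gt, hG⟩ : ∃ Gt : Fin n → G, ∀ x i, g.toFun (x, i) = (x * Gt i, q) :=
    ⟨fun i => (g.toFun (1, i)).1, fun x i => by rw [ActEnd.apply_eq, hqg]⟩
  obtain ⟨H, hH⟩ : ∃ H : Fin n → G, ∀ x i, h.toFun (x, i) = (x * H i, p) :=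
    ⟨fun i => (h.toFun (1, i)).1, fun x i => by rw [ActEnd.apply_eq, hph]⟩
  -- idempotents are trivial at their own column
  have idem_col : ∀ (a : ActEnd G n) (A : Fin n → G) (r : Fin n),
      a * a = a → (∀ x i, a.toFun (x, i) = (x * A i, r)) → A r = 1 := by
    intro a A r ha hA
    have h1 : (a * a).toFun (1, r) = a.toFun (1, r) := by rw [ha]
    have h0 := hA 1 r
    rw [ActEnd.mul_toFun, h0, hA] at h1
    have h2 : 1 * A r * A r = 1 * A r := congrArg Prod.fst h1
    have h3 : A r * A r = A r * 1 := by simpa using h2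
    exact mul_left_cancel h3
  have hEp : E p = 1 := idem_col e E p he hE
  have hHp : H p = 1 := idem_col h H p hh hH
  have hFq : F q = 1 := idem_col f F q hf hF
  have hGq : Gt q = 1 := idem_col g Gt q hg hG
  -- R-relations give proportional multipliers
  obtain ⟨u2, hu2⟩ : ∃ u2, e * u2 = f := by
    have : f ∈ rIdeal e := by rw [hef]; exact ⟨1, mul_one f⟩
    exact this
  have hFE : ∀ i, F i = E i * (u2.toFun (1, p)).1 := by
    intro i
    have h1 : (e * u2).toFun (1, i) = f.toFun (1, i) := by rw [hu2]
    rw [ActEnd.mul_toFun, hE, hF, ActEnd.apply_eq] at h1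
    have h2 := congrArg Prod.fst h1
    simpa using h2.symm
  have hFE' : ∀ i, F i = E i * F p := by
    intro i
    rw [hFE i, hFE p, hEp, one_mul]
  have hEqFp : E q * F p = 1 := by
    have := hFE' q
    rw [hFq] at this
    exact this.symm
  obtain ⟨v, hv⟩ : ∃ v, g * v = h := by
    have : h ∈ rIdeal g := by rw [hgh]; exact ⟨1, mul_one h⟩
    exact this
  have hHG : ∀ i, H i = Gt i * (v.toFun (1, q)).1 := by
    intro i
    have h1 : (g * v).toFun (1, i) = h.toFun (1, i) := by rw [hv]
    rw [ActEnd.mul_toFun, hG, hH, ActEnd.apply_eq] at h1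
    have h2 := congrArg Prod.fst h1
    simpa using h2.symm
  have hHG' : ∀ i, H i = Gt i * H q := by
    intro i
    rw [hHG i, hHG q, hGq, one_mul]
  have hGpHq : Gt p * H q = 1 := by
    have := hHG' p
    rw [hHp] at this
    exact this.symm
  -- the left-right witness forces F p = Gt p
  have hkp : k.toFun (1, p) = (F p, q) := by
    have h1 : (e * k).toFun (1, p) = f.toFun (1, p) := by rw [hek]
    rw [ActEnd.mul_toFun, hE, hEp, hF] at h1
    simpa using h1
  have hkp2 : k.toFun (1, p) = (Gt p, q) := by
    have h1 : (h * k).toFun (1, p) = g.toFun (1, p) := by rw [hhk]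
    rw [ActEnd.mul_toFun, hH, hHp, hG] at h1
    simpa using h1
  have hFGp : F p = Gt p := by
    have h1 := hkp.symm.trans hkp2
    exact congrArg Prod.fst h1
  have hEqHq : E q = H q := by
    have h1 : E q * Gt p = 1 := by rw [← hFGp]; exact hEqFp
    have h2 : E q = (Gt p)⁻¹ := eq_inv_of_mul_eq_one_left h1
    have h3 : H q = (Gt p)⁻¹ := eq_inv_of_mul_eq_one_right hGpHq
    rw [h2, h3]
  have hHqGp : H q * Gt p = 1 := by
    rw [eq_inv_of_mul_eq_one_right hGpHq]
    simp
  have hHiF : ∀ i, H i * F p = Gt i := by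
    intro i
    rw [hHG' i, hFGp, mul_assoc, hHqGp, mul_one]
  -- construct the up-down witness
  refine ⟨ActEnd.diag (fun i => if i = p then p else if i = q then q else p)
      (fun i => if i = p then 1 else if i = q then 1 else H i), ?_, ?_, ?_, ?_, ?_⟩
  · apply ActEnd.ext'
    funext x
    obtain ⟨a, i⟩ := x
    simp only [ActEnd.mul_toFun, ActEnd.diag_toFun]
    by_cases hip : i = p
    · subst hip; simp
    · by_cases hiq : i = q
      · subst hiq; simp [hip]
      · simp [hip, hiq]
  · apply ActEnd.ext'
    funext x
    obtain ⟨a, i⟩ := x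
    simp only [ActEnd.mul_toFun]
    rw [hE]
    simp
  · apply ActEnd.ext'
    funext x
    obtain ⟨a, i⟩ := x
    simp only [ActEnd.mul_toFun]
    rw [hF]
    by_cases hqp : q = p <;> simp [hqp]
  · apply ActEnd.ext'
    funext x
    obtain ⟨a, i⟩ := x
    simp only [ActEnd.mul_toFun, ActEnd.diag_toFun]
    rw [hH]
    by_cases hip : i = p
    · subst hip; simp [hE, hEp, hHp]
    · by_cases hiq : i = q
      · subst hiq; simp [hip, hE, hEqHq]
      · simp [hip, hiq, hE, hEp]
  · apply ActEnd.ext'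
    funext x
    obtain ⟨a, i⟩ := x
    simp only [ActEnd.mul_toFun, ActEnd.diag_toFun]
    rw [hG]
    by_cases hip : i = p
    · subst hip; simp [hF, hFGp]
    · by_cases hiq : i = q
      · subst hiq; simp [hip, hF, hFq, hGq]
      · simp [hip, hiq, hF, mul_assoc, hHiF]
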